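/- Let w be an infinite binary word whose gap function is non-decreasing. Then 0 ≤ f_w(n+1) - f_w(n) ≤ n + 1 for all n ≥ 1. -/

import Mathlib

/-- `u` occurs in `w` starting at position `i` (positions are 1-indexed). -/
def FactorAt (w : ℕ → Fin 2) (i : ℕ) (u : List (Fin 2)) : Prop :=
  u = (List.range u.length).map (fun k => w (i + k))

/-- `u` is a subword (factor) of the infinite word `w`. -/
def IsFactor (w : ℕ → Fin 2) (u : List (Fin 2)) : Prop :=
  ∃ i, 1 ≤ i ∧ FactorAt w i u

/-- The subword complexity function of `w`. -/
noncomputable def complexity (w : ℕ → Fin 2) (n : ℕ) : ℕ :=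
  Set.ncard {u : List (Fin 2) | u.length = n ∧ IsFactor w u}

/-- `G` is the 1-distribution function of `w`: `G 0 = 0` and `G i` is the
position of the `i`-th `1` of `w` (positions 1-indexed). -/
def OneDistrib (w : ℕ → Fin 2) (G : ℕ → ℕ) : Prop :=
  G 0 = 0 ∧ StrictMono G ∧ ∀ p, 1 ≤ p → (w p = 1 ↔ ∃ i, 1 ≤ i ∧ G i = p)

/-- The gap function associated with a 1-distribution function `G`. -/
def gap (G : ℕ → ℕ) (i : ℕ) : ℕ := G i - G (i - 1)

/-- The gap function is strictly increasing. -/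
def GapIncreasing (G : ℕ → ℕ) : Prop :=
  ∀ i, 1 ≤ i → gap G i < gap G (i + 1)

/-- `u` is a right special factor of `w`. -/
def RightSpecial (w : ℕ → Fin 2) (u : List (Fin 2)) : Prop :=
  IsFactor w (u ++ [0]) ∧ IsFactor w (u ++ [1])

lemma fin2_cases (x : Fin 2) : x = 0 ∨ x = 1 := by omega

lemma getElem_idx_congr (l : List (Fin 2)) {i j : ℕ} (h : i = j) (hj : j < l.length) :
    l[i]'(h ▸ hj) = l[j] := by subst h; rfl

lemma factorAt_iff {w : ℕ → Fin 2} {i : ℕ} {u : List (Fin 2)} :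
    FactorAt w i u ↔ ∀ k (h : k < u.length), u[k] = w (i + k) := by
  unfold FactorAt
  constructor
  · intro h k hk
    rw [List.getElem_of_eq h hk]
    simp
  · intro h
    apply List.ext_getElem (by simp)
    intro k h1 h2
    simpa using h k h1

lemma factorAt_snoc {w : ℕ → Fin 2} {i : ℕ} {u : List (Fin 2)} {c : Fin 2}
    (h : FactorAt w i u) (hc : w (i + u.length) = c) : FactorAt w i (u ++ [c]) := by
  rw [factorAt_iff] at h ⊢
  intro k hk
  simp only [List.length_append, List.length_singleton] at hk
  rcases lt_or_ge k u.length with hk' | hk'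
  · rw [List.getElem_append_left hk']; exact h k hk'
  · have hke : k = u.length := by omega
    subst hke
    simpa using hc.symm

lemma factorAt_of_snoc {w : ℕ → Fin 2} {i : ℕ} {u : List (Fin 2)} {c : Fin 2}
    (h : FactorAt w i (u ++ [c])) : FactorAt w i u ∧ w (i + u.length) = c := by
  rw [factorAt_iff] at h
  constructor
  · rw [factorAt_iff]
    intro k hk
    have := h k (by simp; omega)
    rwa [List.getElem_append_left hk] at this
  · have := h u.length (by simp)
    simpa using this.symm

/-- `fo l` is `0` if `l` has no `1`, otherwise `1 +` the index of the first `1`. -/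
def fo : List (Fin 2) → ℕ
  | [] => 0
  | a :: l => if a = 1 then 1 else (if fo l = 0 then 0 else fo l + 1)

lemma fo_le (l : List (Fin 2)) : fo l ≤ l.length := by
  induction l with
  | nil => simp [fo]
  | cons a l ih =>
    simp only [fo, List.length_cons]
    split <;> [omega; (split <;> omega)]

lemma fo_eq_zero (l : List (Fin 2)) : fo l = 0 ↔ (1 : Fin 2) ∉ l := by
  induction l with
  | nil => simp [fo]
  | cons a l ih =>
    simp only [fo, List.mem_cons]
    rcases fin2_cases a with h | h <;> subst h
    · rw [if_neg (by decide : ¬ (0:Fin 2) = 1)]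
      constructor
      · intro h0
        have : fo l = 0 := by by_contra hc; rw [if_neg hc] at h0; omega
        push_neg
        exact ⟨by decide, (ih.mp this)⟩
      · intro hmem
        push_neg at hmem
        rw [ih.mpr hmem.2]
        simp
    · simp

lemma fo_one (l : List (Fin 2)) (h : fo l ≠ 0) :
    ∃ (hl : fo l - 1 < l.length), l[fo l - 1] = 1 ∧
      ∀ k (hk : k < fo l - 1), l[k]'(by omega) = 0 := by
  induction l with
  | nil => simp [fo] at h
  | cons a l ih =>
    rcases fin2_cases a with ha | ha <;> subst ha
    · have hl0 : fo l ≠ 0 := by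
        intro h0; rw [fo_eq_zero] at h0
        apply h; rw [fo_eq_zero]; simp [h0]
      have hfo : fo (0 :: l) = fo l + 1 := by
        simp only [fo, if_neg (by decide : ¬ (0:Fin 2) = 1), if_neg hl0]
      obtain ⟨hl, h1, h0⟩ := ih hl0
      have hlt : fo (0 :: l) - 1 < (0 :: l).length := by rw [hfo]; simp; omega
      refine ⟨hlt, ?_, ?_⟩
      · rw [getElem_idx_congr _ (by rw [hfo]; omega : fo (0::l) - 1 = (fo l - 1) + 1) (by simp; omega),
          List.getElem_cons_succ]
        exact h1
      · intro k hk
        rw [hfo] at hk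
        match k with
        | 0 => simp
        | k + 1 =>
          rw [List.getElem_cons_succ]
          exact h0 k (by omega)
    · have hfo : fo (1 :: l) = 1 := by simp [fo]
      refine ⟨by rw [hfo]; simp, ?_, ?_⟩
      · rw [getElem_idx_congr _ (by rw [hfo] : fo (1::l) - 1 = 0) (by simp)]
        simp
      · intro k hk
        rw [hfo] at hk
        omega
/-- distance of the last `1` from the end (`d ∈ [1, n]`), or `0` if no `1`. -/
def mark (u : List (Fin 2)) : ℕ := fo u.reverse

lemma mark_le (u : List (Fin 2)) : mark u ≤ u.length := by
  simpa [mark] using fo_le u.reverse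

lemma mark_zero {u : List (Fin 2)} (h : mark u = 0) :
    ∀ k (hk : k < u.length), u[k] = 0 := by
  rw [mark, fo_eq_zero, List.mem_reverse] at h
  intro k hk
  rcases fin2_cases (u[k]) with h1 | h1
  · exact h1
  · exact absurd (h1 ▸ List.getElem_mem hk) h

lemma mark_spec {u : List (Fin 2)} (h : mark u ≠ 0) :
    ∃ j, ∃ (hj : j < u.length), mark u = u.length - j ∧ u[j] = 1 ∧
      ∀ k (hk : k < u.length), j < k → u[k] = 0 := by
  have hle := mark_le u
  have h1le : 1 ≤ mark u := by omega
  obtain ⟨hl, h1, h0⟩ := fo_one u.reverse (by simpa [mark] using h)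
  rw [List.length_reverse] at hl
  have hlenpos : 1 ≤ u.length := by omega
  refine ⟨u.length - mark u, by omega, by omega, ?_, ?_⟩
  · have e : u.reverse[mark u - 1]'(by simpa [mark] using hl) =
        u[u.length - 1 - (mark u - 1)]'(by omega) :=
      List.getElem_reverse (by simpa [mark] using hl)
    have h1' : u[u.length - 1 - (mark u - 1)]'(by omega) = 1 := by
      rw [← e]; exact h1
    rw [getElem_idx_congr _ (by omega : u.length - 1 - (mark u - 1) = u.length - mark u)
      (by omega)] at h1'
    exact h1'
  · intro k hk hjk
    have hrev := List.getElem_reverse (l := u) (i := u.length - 1 - k) (by simp; omega)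
    rw [getElem_idx_congr _ (by omega : u.length - 1 - (u.length - 1 - k) = k) hk] at hrev
    rw [← hrev]
    exact h0 (u.length - 1 - k) (by simp [mark] at *; omega)

section WordLemmas

variable {w : ℕ → Fin 2} {G : ℕ → ℕ}

lemma w_G_one (hG : OneDistrib w G) {t : ℕ} (ht : 1 ≤ t) : w (G t) = 1 := by
  have h1 : G 0 < G t := hG.2.1 (by omega)
  rw [hG.1] at h1
  exact (hG.2.2 _ (by omega)).mpr ⟨t, ht, rfl⟩

lemma gapLe (hG : OneDistrib w G) (hmono : ∀ i, 1 ≤ i → gap G i ≤ gap G (i+1)) :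
    ∀ a b, 1 ≤ a → a ≤ b → G a + G (b-1) ≤ G b + G (a-1) := by
  intro a b ha hab
  induction b, hab using Nat.le_induction with
  | base => omega
  | succ b hb IH =>
    have h1 := hmono b (by omega)
    unfold gap at h1
    simp only [Nat.add_sub_cancel] at h1
    have m1 : G (b-1) ≤ G b := hG.2.1.monotone (by omega)
    have m2 : G b ≤ G (b+1) := hG.2.1.monotone (by omega)
    have e1 : b + 1 - 1 = b := by omega
    rw [e1]
    omega

lemma sumLe (hG : OneDistrib w G) (hmono : ∀ i, 1 ≤ i → gap G i ≤ gap G (i+1)) :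
    ∀ a c r, 1 ≤ a → a ≤ c → r < a → G a + G (c - r) ≤ G c + G (a - r) := by
  intro a c r ha hac
  induction r with
  | zero => intro _; simp only [Nat.sub_zero]; omega
  | succ r IH =>
    intro hra
    have IH' := IH (by omega)
    have hg := gapLe hG hmono (a - r) (c - r) (by omega) (by omega)
    have e1 : a - r - 1 = a - (r+1) := by omega
    have e2 : c - r - 1 = c - (r+1) := by omega
    rw [e1, e2] at hg
    omega

lemma claim1 (hG : OneDistrib w G) (hmono : ∀ i, 1 ≤ i → gap G i ≤ gap G (i+1))
    {a b T : ℕ} (ha : 1 ≤ a) (hab : a ≤ b) (hTa : T ≤ G a)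
    (heq : ∀ s, s < T → w (G a - s) = w (G b - s)) :
    ∀ r, r < a → G a - G (a - r) < T → 1 ≤ b - r ∧ G a + G (b - r) = G b + G (a - r) := by
  have hSM := hG.2.1
  intro r
  induction r with
  | zero =>
    intro _ _
    simp only [Nat.sub_zero]
    omega
  | succ r IH =>
    intro hra hAr1
    have mab : G a ≤ G b := hSM.monotone hab
    have m1 : G (a - (r+1)) < G (a - r) := hSM (by omega)
    have m2 : G (a - r) ≤ G a := hSM.monotone (by omega)
    obtain ⟨hbr, hEq⟩ := IH (by omega) (by omega)
    have hw1 : w (G (a - (r+1))) = 1 := w_G_one hG (by omega)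
    have e1 : G a - (G a - G (a - (r+1))) = G (a - (r+1)) := by omega
    have hb1 : w (G b - (G a - G (a - (r+1)))) = 1 := by
      rw [← heq _ hAr1, e1]; exact hw1
    have hppos : 1 ≤ G b - (G a - G (a - (r+1))) := by omega
    obtain ⟨t, ht1, htG⟩ := (hG.2.2 _ hppos).mp hb1
    have hmono_br : G (b - r) ≤ G b := hSM.monotone (by omega)
    have htlt : G t < G (b - r) := by omega
    have htlt' : t < b - r := by
      by_contra hc
      push_neg at hc
      exact absurd (hSM.monotone hc : G (b-r) ≤ G t) (by omega)
    have hble : G t ≤ G (b - (r+1)) := hSM.monotone (by omega)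
    have hAB := sumLe hG hmono a b (r+1) ha hab hra
    have hbb : G (b - (r+1)) ≤ G b := hSM.monotone (by omega)
    exact ⟨by omega, by omega⟩

lemma claim2 (hG : OneDistrib w G) (hmono : ∀ i, 1 ≤ i → gap G i ≤ gap G (i+1))
    {a b T : ℕ} (ha : 1 ≤ a) (hab : a ≤ b) (hTa : T ≤ G a)
    (heq : ∀ s, s < T → w (G a - s) = w (G b - s)) :
    ∀ r, r < b → G b - G (b - r) < T → r < a := by
  have hSM := hG.2.1
  intro r
  induction r with
  | zero => intro _ _; omega
  | succ r IH =>
    intro hrb hBr1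
    have m1 : G (b - (r+1)) < G (b - r) := hSM (by omega)
    have m2 : G (b - r) ≤ G b := hSM.monotone (by omega)
    have mab : G a ≤ G b := hSM.monotone hab
    have hra : r < a := IH (by omega) (by omega)
    have hs := sumLe hG hmono a b r ha hab hra
    have m3 : G (a - r) ≤ G a := hSM.monotone (by omega)
    obtain ⟨hbr', hEq⟩ := claim1 hG hmono ha hab hTa heq r hra (by omega)
    have hw1 : w (G (b - (r+1))) = 1 := w_G_one hG (by omega)
    have e1 : G b - (G b - G (b - (r+1))) = G (b - (r+1)) := by omega
    have ha1 : w (G a - (G b - G (b - (r+1)))) = 1 := by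
      rw [heq _ hBr1, e1]; exact hw1
    have hppos : 1 ≤ G a - (G b - G (b - (r+1))) := by omega
    obtain ⟨t, ht1, htG⟩ := (hG.2.2 _ hppos).mp ha1
    have htlt : G t < G (a - r) := by omega
    have htlt' : t < a - r := by
      by_contra hc
      push_neg at hc
      exact absurd (hSM.monotone hc : G (a - r) ≤ G t) (by omega)
    omega

lemma win_eq (hG : OneDistrib w G) (hmono : ∀ i, 1 ≤ i → gap G i ≤ gap G (i+1))
    {a b c T : ℕ} (ha : 1 ≤ a) (hac : a ≤ c) (hcb : c ≤ b) (hTa : T ≤ G a)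
    (heq : ∀ s, s < T → w (G a - s) = w (G b - s)) :
    ∀ s, s < T → w (G a - s) = w (G c - s) := by
  have hSM := hG.2.1
  have hab : a ≤ b := hac.trans hcb
  have mac : G a ≤ G c := hSM.monotone hac
  have mcb : G c ≤ G b := hSM.monotone hcb
  have hforward : ∀ s, s < T → w (G a - s) = 1 → w (G c - s) = 1 := by
    intro s hs h1
    have hpos : 1 ≤ G a - s := by omega
    obtain ⟨t, ht1, htG⟩ := (hG.2.2 _ hpos).mp h1
    have hta : t ≤ a := by
      by_contra hc'
      push_neg at hc'
      exact absurd (hSM hc' : G a < G t) (by omega)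
    have hra : a - t < a := by omega
    have hGar : G (a - (a - t)) = G a - s := by
      rw [(by omega : a - (a - t) = t)]; omega
    obtain ⟨hbr, hEq⟩ := claim1 hG hmono ha hab hTa heq (a - t) hra (by omega)
    have h2 := sumLe hG hmono a c (a - t) ha hac hra
    have h3 := sumLe hG hmono c b (a - t) (by omega) hcb (by omega)
    have mbr : G (b - (a - t)) ≤ G b := hSM.monotone (by omega)
    have mcr : G (c - (a - t)) ≤ G c := hSM.monotone (by omega)
    have hcr : G c - s = G (c - (a - t)) := by omega
    rw [hcr]
    exact w_G_one hG (by omega)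
  have hback : ∀ s, s < T → w (G c - s) = 1 → w (G a - s) = 1 := by
    intro s hs h2'
    have hpos : 1 ≤ G c - s := by omega
    obtain ⟨t, ht1, htG⟩ := (hG.2.2 _ hpos).mp h2'
    have htc : t ≤ c := by
      by_contra hc'
      push_neg at hc'
      exact absurd (hSM hc' : G c < G t) (by omega)
    have hrc : c - t < c := by omega
    have hcs : G (c - (c - t)) = G c - s := by
      rw [(by omega : c - (c - t) = t)]; omega
    rcases lt_or_ge (c - t) a with hra | hra
    · have h2 := sumLe hG hmono a c (c - t) ha hac hra
      have mar : G (a - (c - t)) ≤ G a := hSM.monotone (by omega)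
      obtain ⟨hbr, hEq⟩ := claim1 hG hmono ha hab hTa heq (c - t) hra (by omega)
      have h3 := sumLe hG hmono c b (c - t) (by omega) hcb (by omega)
      have mbr : G (b - (c - t)) ≤ G b := hSM.monotone (by omega)
      have has : G a - s = G (a - (c - t)) := by omega
      rw [has]
      exact w_G_one hG (by omega)
    · exfalso
      have hr0 : a - 1 < a := by omega
      have h2' := sumLe hG hmono a c (a-1) ha hac hr0
      have mc : G (c - (c - t)) ≤ G (c - (a-1)) := hSM.monotone (by omega)
      have mcc : G (c - (a-1)) ≤ G c := hSM.monotone (by omega)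
      have e1 : a - (a - 1) = 1 := by omega
      rw [e1] at h2'
      have hA : G a - G (a - (a-1)) < T := by rw [e1]; omega
      obtain ⟨hbr, hEq⟩ := claim1 hG hmono ha hab hTa heq (a-1) hr0 hA
      rw [e1] at hEq
      have h3 := sumLe hG hmono c b (a-1) (by omega) hcb (by omega)
      have hg := gapLe hG hmono 1 (c - (a-1)) le_rfl (by omega)
      rw [(rfl : (1:ℕ) - 1 = 0), hG.1] at hg
      have mc2 : G (c - (c - t)) ≤ G (c - (a-1) - 1) := hSM.monotone (by omega)
      have mbr : G (b - (a-1)) ≤ G b := hSM.monotone (by omega)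
      have m1a : G 1 ≤ G a := hSM.monotone ha
      omega
  intro s hs
  rcases fin2_cases (w (G a - s)) with h1 | h1 <;>
    rcases fin2_cases (w (G c - s)) with h2 | h2
  · rw [h1, h2]
  · exact absurd (hback s hs h2) (by rw [h1]; decide)
  · exact absurd (hforward s hs h1) (by rw [h2]; decide)
  · rw [h1, h2]

end WordLemmas

section RS

variable {w : ℕ → Fin 2} {G : ℕ → ℕ}

lemma G_lt_reflect (hSM : StrictMono G) {x y : ℕ} (h : G x < G y) : x < y := by
  by_contra hc
  push_neg at hc
  exact absurd (hSM.monotone hc) (by omega)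

lemma rs_extract (hG : OneDistrib w G) {n : ℕ} (hn : 1 ≤ n)
    {u : List (Fin 2)} (hlen : u.length = n)
    (h1 : IsFactor w (u ++ [1])) (h0 : IsFactor w (u ++ [0]))
    {j : ℕ} (hj : j < n) (hone : ∀ (h : j < u.length), u[j]'h = 1)
    (hzeros : ∀ k (hk : k < u.length), j < k → u[k]'hk = 0) :
    ∃ K M, 2 ≤ K ∧ 1 ≤ M ∧
      G K = G (K-1) + (n - j) ∧
      G M + (n - j) < G (M+1) ∧
      n < G K ∧
      (∀ s, 1 ≤ s → s ≤ n → ∀ (h : n - s < u.length), u[n - s]'h = w (G K - s)) ∧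
      (∀ s, 1 ≤ s → s ≤ n → ∀ (h : n - s < u.length), u[n - s]'h = w (G M + (n - j) - s)) := by
  have hSM := hG.2.1
  set d := n - j with hd
  have hd1 : 1 ≤ d := by omega
  have hdn : d ≤ n := by omega
  -- A occurrence (followed by 1)
  obtain ⟨i, hi1, hfa⟩ := h1
  rw [factorAt_iff] at hfa
  have hwn : w (i + n) = 1 := by
    have h' := hfa u.length (by simp)
    rw [List.getElem_concat_length rfl] at h'
    have h'' := h'.symm
    rwa [hlen] at h''
  have hchar : ∀ k (hk : k < u.length), u[k]'hk = w (i + k) := by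
    intro k hk
    have := hfa k (by simp; omega)
    rwa [List.getElem_append_left (by omega)] at this
  obtain ⟨K, hK1, hKG⟩ := (hG.2.2 (i+n) (by omega)).mp hwn
  have hA : ∀ s, 1 ≤ s → s ≤ n → ∀ (h : n - s < u.length), u[n - s]'h = w (G K - s) := by
    intro s hs1 hsn h
    rw [hchar (n - s) h]
    have e : i + (n - s) = G K - s := by omega
    rw [e]
  have hwKd : w (G K - d) = 1 := by
    have h' := hchar j (by omega)
    rw [hone (by omega)] at h'
    have e : i + j = G K - d := by omega
    rw [e] at h'
    exact h'.symm
  obtain ⟨t, ht1, htG⟩ := (hG.2.2 _ (by omega)).mp hwKd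
  have htK : t < K := G_lt_reflect hSM (by omega)
  have htKm : t = K - 1 := by
    by_contra hc
    have htK2 : t ≤ K - 2 := by omega
    have hm1 : G t < G (K-1) := hSM (by omega)
    have hm2 : G (K-1) < G K := hSM (by omega)
    set s0 := G K - G (K-1) with hs0
    have hs01 : 1 ≤ s0 := by omega
    have hs0d : s0 < d := by omega
    have hz := hzeros (n - s0) (by omega) (by omega)
    rw [hchar (n - s0) (by omega)] at hz
    have e : i + (n - s0) = G (K-1) := by omega
    rw [e] at hz
    rw [w_G_one hG (by omega)] at hz
    exact absurd hz (by decide)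
  have hK2 : 2 ≤ K := by omega
  have hGK : G K = G (K-1) + d := by
    rw [← htKm]
    omega
  have hnK : n < G K := by omega
  -- B occurrence (followed by 0)
  obtain ⟨i', hi'1, hfb⟩ := h0
  rw [factorAt_iff] at hfb
  have hwn' : w (i' + n) = 0 := by
    have h' := hfb u.length (by simp)
    rw [List.getElem_concat_length rfl] at h'
    have h'' := h'.symm
    rwa [hlen] at h''
  have hchar' : ∀ k (hk : k < u.length), u[k]'hk = w (i' + k) := by
    intro k hk
    have := hfb k (by simp; omega)
    rwa [List.getElem_append_left (by omega)] at this
  have hwMd : w (i' + j) = 1 := by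
    have h' := hchar' j (by omega)
    rw [hone (by omega)] at h'
    exact h'.symm
  obtain ⟨M, hM1, hMG⟩ := (hG.2.2 (i' + j) (by omega)).mp hwMd
  have hB : ∀ s, 1 ≤ s → s ≤ n → ∀ (h : n - s < u.length), u[n - s]'h = w (G M + d - s) := by
    intro s hs1 hsn h
    rw [hchar' (n - s) h]
    have e : i' + (n - s) = G M + d - s := by omega
    rw [e]
  have hGM : G M + d < G (M+1) := by
    by_contra hc
    push_neg at hc
    have hm1 : G M < G (M+1) := hSM (by omega)
    set s0 := i' + n - G (M+1) with hs0
    have hs0d : s0 < d := by omega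
    rcases Nat.eq_zero_or_pos s0 with h00 | h01
    · have e : G (M+1) = i' + n := by omega
      have h1' : w (i' + n) = 1 := by rw [← e]; exact w_G_one hG (by omega)
      rw [hwn'] at h1'
      exact absurd h1' (by decide)
    · have hz := hzeros (n - s0) (by omega) (by omega)
      rw [hchar' (n - s0) (by omega)] at hz
      have e : i' + (n - s0) = G (M+1) := by omega
      rw [e] at hz
      rw [w_G_one hG (by omega)] at hz
      exact absurd hz (by decide)
  exact ⟨K, M, hK2, hM1, hGK, hGM, hnK, hA, hB⟩

lemma rs_core (hG : OneDistrib w G) (hmono : ∀ i, 1 ≤ i → gap G i ≤ gap G (i+1))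
    {n d : ℕ} (hn : 1 ≤ n) (hd1 : 1 ≤ d) (hdn : d ≤ n)
    {u u' : List (Fin 2)} (hu : u.length = n) (hu' : u'.length = n)
    {K M K' : ℕ} (hK2 : 2 ≤ K) (hK2' : 2 ≤ K') (hM1 : 1 ≤ M)
    (hGK : G K = G (K-1) + d) (hGK' : G K' = G (K'-1) + d)
    (hGM : G M + d < G (M+1))
    (hnK : n < G K) (hnK' : n < G K')
    (hA : ∀ s, 1 ≤ s → s ≤ n → ∀ (h : n - s < u.length), u[n - s]'h = w (G K - s))
    (hB : ∀ s, 1 ≤ s → s ≤ n → ∀ (h : n - s < u.length), u[n - s]'h = w (G M + d - s))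
    (hA' : ∀ s, 1 ≤ s → s ≤ n → ∀ (h : n - s < u'.length), u'[n - s]'h = w (G K' - s))
    (hKK' : K ≤ K') : u = u' := by
  have hSM := hG.2.1
  have hKM : K ≤ M := by
    by_contra hc
    push_neg at hc
    have hgl := gapLe hG hmono (M+1) K (by omega) (by omega)
    simp only [Nat.add_sub_cancel] at hgl
    have m1 : G (K-1) ≤ G K := hSM.monotone (by omega)
    omega
  have hK'M : K' ≤ M := by
    by_contra hc
    push_neg at hc
    have hgl := gapLe hG hmono (M+1) K' (by omega) (by omega)
    simp only [Nat.add_sub_cancel] at hgl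
    have m1 : G (K'-1) ≤ G K' := hSM.monotone (by omega)
    omega
  have heq : ∀ s, s < n - d + 1 → w (G (K-1) - s) = w (G M - s) := by
    intro s hsT
    rcases Nat.eq_zero_or_pos s with hs0 | hs1
    · subst hs0
      simp only [Nat.sub_zero]
      rw [w_G_one hG (by omega), w_G_one hG (by omega)]
    · have hsn : s + d ≤ n := by omega
      have e1 : G (K-1) - s = G K - (s + d) := by omega
      have e2 : G M - s = G M + d - (s + d) := by omega
      rw [e1, e2, ← hA (s+d) (by omega) hsn (by omega), ← hB (s+d) (by omega) hsn (by omega)]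
  have hTa : n - d + 1 ≤ G (K-1) := by omega
  have hwin := win_eq hG hmono (a := K-1) (b := M) (c := K'-1)
    (by omega) (by omega) (by omega) hTa heq
  apply List.ext_getElem (by rw [hu, hu'])
  intro k hk1 hk2
  have hkn : k < n := by omega
  set s := n - k with hsdef
  have hs1 : 1 ≤ s := by omega
  have hsn : s ≤ n := by omega
  have hks : k = n - s := by omega
  have eu : u[k]'(hk1) = u[n - s]'(by omega) := getElem_idx_congr u hks (by omega)
  have eu' : u'[k]'(hk2) = u'[n - s]'(by omega) := getElem_idx_congr u' hks (by omega)
  rw [eu, eu', hA s hs1 hsn (by omega), hA' s hs1 hsn (by omega)]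
  rcases lt_trichotomy s d with hsd | hsd | hsd
  · -- s < d : both sides are 0
    have hz : ∀ L, 2 ≤ L → G L = G (L-1) + d → n < G L → w (G L - s) = 0 := by
      intro L hL2 hGL hnL
      rcases fin2_cases (w (G L - s)) with h | h
      · exact h
      · exfalso
        obtain ⟨t, ht1, htG⟩ := (hG.2.2 _ (by omega)).mp h
        have ht1' : t < L := G_lt_reflect hSM (by omega)
        have ht2' : L - 1 < t := G_lt_reflect hSM (by omega)
        omega
    rw [hz K hK2 hGK hnK, hz K' hK2' hGK' hnK']
  · subst hsd
    have e1 : G K - s = G (K-1) := by omega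
    have e2 : G K' - s = G (K'-1) := by omega
    rw [e1, e2, w_G_one hG (by omega), w_G_one hG (by omega)]
  · -- d < s
    have e1 : G K - s = G (K-1) - (s - d) := by omega
    have e2 : G K' - s = G (K'-1) - (s - d) := by omega
    rw [e1, e2]
    exact hwin (s - d) (by omega)

lemma rs_unique (hG : OneDistrib w G) (hmono : ∀ i, 1 ≤ i → gap G i ≤ gap G (i+1))
    {n : ℕ} (hn : 1 ≤ n) {u u' : List (Fin 2)} (hu : u.length = n) (hu' : u'.length = n)
    (h0 : IsFactor w (u ++ [0])) (h1 : IsFactor w (u ++ [1]))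
    (h0' : IsFactor w (u' ++ [0])) (h1' : IsFactor w (u' ++ [1]))
    (hm : mark u = mark u') : u = u' := by
  rcases Nat.eq_zero_or_pos (mark u) with hz | hp
  · apply List.ext_getElem (by rw [hu, hu'])
    intro k hk1 hk2
    rw [mark_zero hz k hk1, mark_zero (by omega : mark u' = 0) k hk2]
  · obtain ⟨j, hj, hjm, hone, hzeros⟩ := mark_spec (by omega : mark u ≠ 0)
    obtain ⟨j', hj', hjm', hone', hzeros'⟩ := mark_spec (by omega : mark u' ≠ 0)
    rw [hu] at hjm
    rw [hu'] at hjm'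
    have hjn : j < n := by omega
    have hjn' : j' < n := by omega
    have hjj : j' = j := by omega
    subst hjj
    obtain ⟨K, M, hK2, hM1, hGK, hGM, hnK, hA, hB⟩ :=
      rs_extract hG hn hu h1 h0 hjn (fun _ => hone) hzeros
    obtain ⟨K', M', hK2', hM1', hGK', hGM', hnK', hA', hB'⟩ :=
      rs_extract hG hn hu' h1' h0' hjn' (fun _ => hone') hzeros'
    rcases le_total K K' with hKK | hKK
    · exact rs_core hG hmono hn (by omega) (by omega) hu hu' hK2 hK2' hM1
        hGK hGK' hGM hnK hnK' hA hB hA' hKK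
    · exact (rs_core hG hmono hn (by omega) (by omega) hu' hu hK2' hK2 hM1'
        hGK' hGK hGM' hnK' hnK hA' hB' hA hKK).symm

end RS


theorem stmt17 (w : ℕ → Fin 2) (G : ℕ → ℕ) (hG : OneDistrib w G)
    (hmono : ∀ i, 1 ≤ i → gap G i ≤ gap G (i + 1))
    (n : ℕ) (hn : 1 ≤ n) :
    complexity w n ≤ complexity w (n + 1) ∧
    complexity w (n + 1) ≤ complexity w n + (n + 1) := by
  classical
  set S : ℕ → Set (List (Fin 2)) := fun m => {u | u.length = m ∧ IsFactor w u} with hS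
  have hfin : ∀ m, (S m).Finite :=
    fun m => (List.finite_length_eq (Fin 2) m).subset (fun u hu => hu.1)
  have hcomp : ∀ m, complexity w m = (S m).ncard := fun m => rfl
  constructor
  · -- lower bound
    have hsub : S n ⊆ (fun v => List.take n v) '' S (n+1) := by
      rintro u ⟨hlen, i, hi, hfa⟩
      refine ⟨u ++ [w (i + n)], ⟨by simp [hlen], i, hi,
        factorAt_snoc hfa (by rw [hlen])⟩, ?_⟩
      simp only
      rw [← hlen, List.take_left]
    rw [hcomp, hcomp]
    calc (S n).ncard ≤ ((fun v => List.take n v) '' S (n+1)).ncard :=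
          Set.ncard_le_ncard hsub ((hfin (n+1)).image _)
      _ ≤ (S (n+1)).ncard := Set.ncard_image_le (hfin (n+1))
  · -- upper bound
    set S0 : Set (List (Fin 2)) := {u | u.length = n ∧ IsFactor w (u ++ [0])} with hS0
    set S1 : Set (List (Fin 2)) := {u | u.length = n ∧ IsFactor w (u ++ [1])} with hS1
    have hfin0 : S0.Finite := (List.finite_length_eq (Fin 2) n).subset (fun u hu => hu.1)
    have hfin1 : S1.Finite := (List.finite_length_eq (Fin 2) n).subset (fun u hu => hu.1)
    have hsub2 : S (n+1) ⊆ ((fun u => u ++ ([0] : List (Fin 2))) '' S0) ∪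
        ((fun u => u ++ ([1] : List (Fin 2))) '' S1) := by
      rintro v ⟨hlen, i, hi, hfa⟩
      rcases List.eq_nil_or_concat v with rfl | ⟨u0, c, rfl⟩
      · simp at hlen
      · rw [List.concat_eq_append] at hfa ⊢
        have hu0len : u0.length = n := by simp at hlen; omega
        obtain ⟨hfa0, hc⟩ := factorAt_of_snoc hfa
        rcases fin2_cases c with rfl | rfl
        · exact Or.inl ⟨u0, ⟨hu0len, i, hi, hfa⟩, rfl⟩
        · exact Or.inr ⟨u0, ⟨hu0len, i, hi, hfa⟩, rfl⟩
    have hSn : S0 ∪ S1 = S n := by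
      ext u
      constructor
      · rintro (⟨hl, i, hi, hfa⟩ | ⟨hl, i, hi, hfa⟩) <;>
          exact ⟨hl, i, hi, (factorAt_of_snoc hfa).1⟩
      · rintro ⟨hl, i, hi, hfa⟩
        rcases fin2_cases (w (i + n)) with hc | hc
        · exact Or.inl ⟨hl, i, hi, factorAt_snoc hfa (by rw [hl]; exact hc)⟩
        · exact Or.inr ⟨hl, i, hi, factorAt_snoc hfa (by rw [hl]; exact hc)⟩
    have hinter : (S0 ∩ S1).ncard ≤ n + 1 := by
      have hinj : Set.InjOn mark (S0 ∩ S1) := by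
        rintro u ⟨⟨hlu, hf0⟩, ⟨_, hf1⟩⟩ u' ⟨⟨hlu', hf0'⟩, ⟨_, hf1'⟩⟩ hm
        exact rs_unique hG hmono hn hlu hlu' hf0 hf1 hf0' hf1' hm
      have himg : mark '' (S0 ∩ S1) ⊆ ↑(Finset.range (n+1)) := by
        rintro x ⟨u, ⟨⟨hlu, _⟩, _⟩, rfl⟩
        simp only [Finset.coe_range, Set.mem_Iio]
        have := mark_le u
        omega
      calc (S0 ∩ S1).ncard = (mark '' (S0 ∩ S1)).ncard :=
            (Set.ncard_image_of_injOn hinj).symm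
        _ ≤ (↑(Finset.range (n+1)) : Set ℕ).ncard :=
            Set.ncard_le_ncard himg (Finset.range (n+1)).finite_toSet
        _ = n + 1 := by rw [Set.ncard_coe_finset, Finset.card_range]
    rw [hcomp, hcomp]
    calc (S (n+1)).ncard
        ≤ (((fun u => u ++ ([0] : List (Fin 2))) '' S0) ∪
            ((fun u => u ++ ([1] : List (Fin 2))) '' S1)).ncard :=
          Set.ncard_le_ncard hsub2 ((hfin0.image _).union (hfin1.image _))
      _ ≤ ((fun u => u ++ ([0] : List (Fin 2))) '' S0).ncard +
            ((fun u => u ++ ([1] : List (Fin 2))) '' S1).ncard :=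
          Set.ncard_union_le _ _
      _ ≤ S0.ncard + S1.ncard :=
          add_le_add (Set.ncard_image_le hfin0) (Set.ncard_image_le hfin1)
      _ = (S0 ∪ S1).ncard + (S0 ∩ S1).ncard :=
          (Set.ncard_union_add_ncard_inter _ _ hfin0 hfin1).symm
      _ = (S n).ncard + (S0 ∩ S1).ncard := by rw [hSn]
      _ ≤ (S n).ncard + (n + 1) := by omega
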